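/- Let k be a field of characteristic zero, A = A₀ ⊕ A₁ a graded algebra over k, and let E, E', E'' be graded A-modules with E = E' ⊕ E'' as graded A-modules (so Eᵢ = E'ᵢ ⊕ E''ᵢ for i ∈ ℤ/2ℤ). If two of E, E', E'' are complex, then so is the third. -/

import Mathlib

/-!
Lemma `compcri` of the paper: if `E = E' ⊕ E''` is a direct sum of graded
`A`-modules and two of `E, E', E''` are complex, then so is the third.
-/

/-- A (ℤ/2ℤ-)graded algebra over `k`. -/
structure GradedAlgebraStruct (k A : Type*) [CommSemiring k] [CommRing A] [Algebra k A] where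
  deg : ZMod 2 → Submodule k A
  one_mem : (1 : A) ∈ deg 0
  mul_mem : ∀ i j : ZMod 2, ∀ a ∈ deg i, ∀ b ∈ deg j, a * b ∈ deg (i + j)
  isCompl_deg : IsCompl (deg 0) (deg 1)

/-- A grading `E = E₀ ⊕ E₁` (by `k`-subspaces) on an `A`-module `E` compatible with
the grading of `A`: `Aᵢ • Eⱼ ⊆ E_{i+j}`. -/
structure GradedModuleStruct (k A : Type*) [CommSemiring k] [CommRing A] [Algebra k A]
    (G : GradedAlgebraStruct k A)
    (E : Type*) [AddCommGroup E] [Module A E] [Module k E] [IsScalarTower k A E] where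
  deg : ZMod 2 → Submodule k E
  smul_mem : ∀ i j : ZMod 2, ∀ a ∈ G.deg i, ∀ e ∈ deg j, a • e ∈ deg (i + j)
  isCompl_deg : IsCompl (deg 0) (deg 1)

/-- A graded module is complex if `E₀` and `E₁` are isomorphic as `A₀`-modules, i.e.
there is a `k`-linear isomorphism `E₀ ≃ E₁` commuting with the action of `A₀`. -/
def GradedModuleStruct.IsComplex {k A : Type*} [CommSemiring k] [CommRing A] [Algebra k A]
    {G : GradedAlgebraStruct k A}
    {E : Type*} [AddCommGroup E] [Module A E] [Module k E] [IsScalarTower k A E]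
    (M : GradedModuleStruct k A G E) : Prop :=
  ∃ f : (M.deg 0) ≃ₗ[k] (M.deg 1),
    ∀ a ∈ G.deg 0, ∀ x : M.deg 0, ∀ hx : a • (x : E) ∈ M.deg 0,
      ((f ⟨a • (x : E), hx⟩ : E)) = a • ((f x : E))


open Module LinearMap

section Cancel

universe u

variable {R V W : Type*} [Ring R]
  [AddCommGroup V] [Module R V] [AddCommGroup W] [Module R W]

private theorem prod_semisimple [IsSemisimpleModule R V] [IsSemisimpleModule R W] :
    IsSemisimpleModule R (V × W) := by
  rw [← Submodule.topEquiv.isSemisimpleModule_iff_of_bijective (LinearEquiv.bijective _),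
    ← LinearMap.sup_range_inl_inr]
  exact .sup (.range _) (.range _)

/-- Linear equivalence dropping a subsingleton factor. -/
private def prodSubsingletonEquiv (U : Type*) [AddCommGroup U] [Module R U] [Subsingleton U] :
    (V × U) ≃ₗ[R] V where
  toFun := Prod.fst
  map_add' _ _ := rfl
  map_smul' _ _ := rfl
  invFun v := (v, 0)
  left_inv p := by
    refine Prod.ext rfl ?_
    exact Subsingleton.elim _ _
  right_inv _ := rfl

private def prodShuffle (U S C : Type*) [AddCommGroup U] [Module R U] [AddCommGroup S]
    [Module R S] [AddCommGroup C] [Module R C] :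
    (U × (S × C)) ≃ₗ[R] ((U × C) × S) where
  toFun p := ((p.1, p.2.2), p.2.1)
  map_add' _ _ := rfl
  map_smul' _ _ := rfl
  invFun p := (p.1.1, (p.2, p.1.2))
  left_inv _ := rfl
  right_inv _ := rfl

theorem cancel_simple [IsSemisimpleModule R V]
    {S : Type*} [AddCommGroup S] [Module R S] [IsSimpleModule R S]
    (ψ : (V × S) ≃ₗ[R] (W × S)) : Nonempty (V ≃ₗ[R] W) := by
  classical
  set a : V →ₗ[R] W := (LinearMap.fst R W S) ∘ₗ ψ.toLinearMap ∘ₗ (LinearMap.inl R V S) with ha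
  set b : S →ₗ[R] W := (LinearMap.fst R W S) ∘ₗ ψ.toLinearMap ∘ₗ (LinearMap.inr R V S) with hb
  set c : V →ₗ[R] S := (LinearMap.snd R W S) ∘ₗ ψ.toLinearMap ∘ₗ (LinearMap.inl R V S) with hc
  set d : S →ₗ[R] S := (LinearMap.snd R W S) ∘ₗ ψ.toLinearMap ∘ₗ (LinearMap.inr R V S) with hd
  have hψ : ∀ v s, ψ (v, s) = (a v + b s, c v + d s) := by
    intro v s
    have h1 : ((v, s) : V × S) = (v, 0) + (0, s) := by simp
    rw [h1, map_add]
    rfl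
  by_cases hd0 : d = 0
  · -- b injective, c surjective
    have hbinj : Function.Injective b := by
      rw [injective_iff_map_eq_zero]
      intro s hs
      have h2 : ψ (0, s) = 0 := by
        rw [hψ]; simp [hs, hd0]
      have h3 := ψ.injective (h2.trans (map_zero ψ.toLinearMap).symm)
      exact (Prod.mk_eq_zero.1 h3).2
    have hcsurj : Function.Surjective c := by
      intro s
      obtain ⟨⟨v, t⟩, hv⟩ := ψ.surjective (0, s)
      rw [hψ, Prod.mk.injEq] at hv
      refine ⟨v, ?_⟩
      have h2 := hv.2
      simpa [hd0] using h2
    set K := LinearMap.ker c with hK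
    obtain ⟨C, hC⟩ := exists_isCompl K
    -- c restricted to C is bijective onto S
    have hcC : Function.Bijective (c ∘ₗ C.subtype) := by
      constructor
      · rw [injective_iff_map_eq_zero]
        intro x hx
        have hxK : (x : V) ∈ K := hx
        have hxm : (x : V) ∈ K ⊓ C := ⟨hxK, x.2⟩
        rw [hC.inf_eq_bot] at hxm
        exact Subtype.ext hxm
      · intro s
        obtain ⟨v, hv⟩ := hcsurj s
        have hv2 : v ∈ K ⊔ C := by rw [hC.sup_eq_top]; trivial
        obtain ⟨y, hy, z, hz, rfl⟩ := Submodule.mem_sup.1 hv2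
        refine ⟨⟨z, hz⟩, ?_⟩
        have hy0 : c y = 0 := hy
        simpa [map_add, hy0] using hv
    -- Φ : K × S → W
    set Φ : (K × S) →ₗ[R] W := (a ∘ₗ K.subtype).coprod b with hΦdef
    have hΦ : Function.Bijective Φ := by
      constructor
      · rw [injective_iff_map_eq_zero]
        rintro ⟨x, s⟩ h
        have h1 : a (x : V) + b s = 0 := h
        have h2 : ψ ((x : V), s) = 0 := by
          rw [hψ, h1]
          have hx0 : c (x : V) = 0 := x.2
          simp [hx0, hd0]
        have h3 := ψ.injective (h2.trans (map_zero ψ.toLinearMap).symm)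
        obtain ⟨h4, h5⟩ := Prod.mk_eq_zero.1 h3
        rw [Prod.mk_eq_zero]
        exact ⟨Subtype.ext h4, h5⟩
      · intro w
        obtain ⟨⟨v, s⟩, hv⟩ := ψ.surjective (w, 0)
        rw [hψ, Prod.mk.injEq] at hv
        have h2 : c v = 0 := by simpa [hd0] using hv.2
        exact ⟨(⟨v, h2⟩, s), hv.1⟩
    exact ⟨(Submodule.prodEquivOfIsCompl K C hC).symm ≪≫ₗ
      (LinearEquiv.refl R ↥K).prodCongr (LinearEquiv.ofBijective _ hcC) ≪≫ₗ
      LinearEquiv.ofBijective Φ hΦ⟩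
  · have hdb : Function.Bijective d := LinearMap.bijective_of_ne_zero hd0
    set dE := LinearEquiv.ofBijective d hdb with hdE
    set φ : V →ₗ[R] W := a - b ∘ₗ (dE.symm : S →ₗ[R] S) ∘ₗ c with hφ
    have hdd : ∀ s, d (dE.symm s) = s := fun s => dE.apply_symm_apply s
    have key : ∀ v, ψ (v, -dE.symm (c v)) = (φ v, 0) := by
      intro v
      rw [hψ]
      have h2 : d (-dE.symm (c v)) = -(c v) := by rw [map_neg, hdd]
      rw [h2]
      refine Prod.ext ?_ (by simp)
      show a v + b (-dE.symm (c v)) = φ v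
      rw [map_neg, ← sub_eq_add_neg]
      rfl
    have hbij : Function.Bijective φ := by
      constructor
      · rw [injective_iff_map_eq_zero]
        intro v hv
        have h1 := key v
        rw [hv] at h1
        have h2 := ψ.injective (h1.trans (Prod.mk_eq_zero.2 ⟨rfl, rfl⟩) |>.trans (map_zero (ψ : V × S →ₗ[R] W × S)).symm)
        exact (Prod.mk_eq_zero.1 h2).1
      · intro w
        obtain ⟨⟨v, s⟩, hv⟩ := ψ.surjective (w, 0)
        rw [hψ, Prod.mk.injEq] at hv
        obtain ⟨h1, h2⟩ := hv
        have h3 : s = -dE.symm (c v) := by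
          have hds : dE s = -(c v) := by
            show d s = -(c v)
            linear_combination (norm := abel) h2
          calc s = dE.symm (dE s) := (dE.symm_apply_apply s).symm
          _ = dE.symm (-(c v)) := by rw [hds]
          _ = -dE.symm (c v) := map_neg _ _
        have h4 := key v
        rw [← h3, hψ, Prod.mk.injEq] at h4
        exact ⟨v, h4.1.symm.trans h1⟩
    exact ⟨LinearEquiv.ofBijective φ hbij⟩

variable {k : Type*} [Field k] [Algebra k R]
  [Module k V] [IsScalarTower k R V] [Module k W] [IsScalarTower k R W]

theorem cancel_finrank [IsSemisimpleModule R V] [IsSemisimpleModule R W] (n : ℕ) :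
    ∀ (U : Type u) [AddCommGroup U] [Module R U] [Module k U] [IsScalarTower k R U]
      [FiniteDimensional k U] [IsSemisimpleModule R U],
      Module.finrank k U ≤ n → ((V × U) ≃ₗ[R] (W × U)) → Nonempty (V ≃ₗ[R] W) := by
  induction n with
  | zero =>
    intro U _ _ _ _ _ _ h ψ
    have hU : Subsingleton U := Module.finrank_zero_iff.mp (Nat.le_zero.mp h)
    exact ⟨(prodSubsingletonEquiv U).symm ≪≫ₗ ψ ≪≫ₗ prodSubsingletonEquiv U⟩
  | succ n ih =>
    intro U _ _ _ _ _ _ h ψ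
    rcases subsingleton_or_nontrivial U with hU | hU
    · exact ⟨(prodSubsingletonEquiv U).symm ≪≫ₗ ψ ≪≫ₗ prodSubsingletonEquiv U⟩
    · obtain ⟨S, hS⟩ := IsSemisimpleModule.exists_simple_submodule R U
      obtain ⟨C, hC⟩ := exists_isCompl S
      haveI : FiniteDimensional k ↥S :=
        FiniteDimensional.of_injective ((S.subtype).restrictScalars k) Subtype.coe_injective
      haveI : FiniteDimensional k ↥C :=
        FiniteDimensional.of_injective ((C.subtype).restrictScalars k) Subtype.coe_injective
      have e : U ≃ₗ[R] (↥S × ↥C) := (Submodule.prodEquivOfIsCompl S C hC).symm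
      have hrank : finrank k ↥S + finrank k ↥C = finrank k U := by
        rw [← Module.finrank_prod]
        exact (LinearEquiv.finrank_eq (e.restrictScalars k)).symm
      haveI : Nontrivial ↥S := IsSimpleModule.nontrivial R ↥S
      have hS1 : 0 < finrank k ↥S := Module.finrank_pos
      have hCn : finrank k ↥C ≤ n := by omega
      haveI : IsSemisimpleModule R (V × ↥C) := prod_semisimple
      let E1 : (V × U) ≃ₗ[R] ((V × ↥C) × ↥S) :=
        (LinearEquiv.refl R V).prodCongr e ≪≫ₗ prodShuffle V ↥S ↥C
      let E2 : (W × U) ≃ₗ[R] ((W × ↥C) × ↥S) :=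
        (LinearEquiv.refl R W).prodCongr e ≪≫ₗ prodShuffle W ↥S ↥C
      obtain ⟨φ⟩ := cancel_simple (E1.symm ≪≫ₗ ψ ≪≫ₗ E2)
      exact ih ↥C hCn φ

end Cancel

/- application-side auxiliaries -/
section App

variable {k A : Type*} [CommSemiring k] [CommRing A] [Algebra k A]

lemma GradedAlgebraStruct.mul_mem0 (G : GradedAlgebraStruct k A) {a b : A}
    (ha : a ∈ G.deg 0) (hb : b ∈ G.deg 0) : a * b ∈ G.deg 0 := by
  simpa using G.mul_mem 0 0 a ha b hb

lemma GradedAlgebraStruct.algebraMap_mem0 (G : GradedAlgebraStruct k A) (c : k) :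
    algebraMap k A c ∈ G.deg 0 := by
  rw [Algebra.algebraMap_eq_smul_one]
  exact (G.deg 0).smul_mem c G.one_mem

/-- The even part of a graded algebra, as a subalgebra. -/
def GradedAlgebraStruct.sub (G : GradedAlgebraStruct k A) : Subalgebra k A where
  carrier := (G.deg 0 : Set A)
  mul_mem' ha hb := G.mul_mem0 ha hb
  add_mem' ha hb := (G.deg 0).add_mem ha hb
  one_mem' := G.one_mem
  algebraMap_mem' c := G.algebraMap_mem0 c

variable (G : GradedAlgebraStruct k A)
variable {E : Type*} [AddCommGroup E] [Module A E] [Module k E] [IsScalarTower k A E]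
variable (M : GradedModuleStruct k A G E)

instance gsmul (j : ZMod 2) : SMul (G.sub) ↥(M.deg j) :=
  ⟨fun r x => ⟨(r : A) • (x : E), by simpa using M.smul_mem 0 j r r.2 x x.2⟩⟩

@[simp] lemma gsmul_coe (j : ZMod 2) (r : G.sub) (x : ↥(M.deg j)) :
    ((r • x : ↥(M.deg j)) : E) = (r : A) • (x : E) := rfl

instance gmodule (j : ZMod 2) : Module (G.sub) ↥(M.deg j) where
  one_smul x := Subtype.ext (by simp)
  mul_smul r s x := Subtype.ext (by simp [mul_smul])
  smul_zero r := Subtype.ext (by simp)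
  smul_add r x y := Subtype.ext (by simp)
  add_smul r s x := Subtype.ext (by simp [add_smul])
  zero_smul x := Subtype.ext (by simp)

instance gtower (j : ZMod 2) : IsScalarTower k (G.sub) ↥(M.deg j) :=
  ⟨fun c r x => Subtype.ext (by simp [smul_assoc])⟩

/-- `IsComplex` in terms of `G.sub`-linear equivalences. -/
lemma isComplex_iff_nonempty :
    M.IsComplex ↔ Nonempty (↥(M.deg 0) ≃ₗ[G.sub] ↥(M.deg 1)) := by
  constructor
  · rintro ⟨f, hf⟩
    refine ⟨{ toFun := f, invFun := f.symm, map_add' := f.map_add,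
              left_inv := f.left_inv, right_inv := f.right_inv, map_smul' := ?_ }⟩
    intro r x
    refine Subtype.ext ?_
    have h := hf (r : A) r.2 x (r • x).2
    calc ((f (r • x) : E)) = ((f ⟨(r : A) • (x : E), (r • x).2⟩ : E)) := rfl
    _ = (r : A) • ((f x : E)) := h
    _ = ((r • f x : ↥(M.deg 1)) : E) := rfl
  · rintro ⟨g⟩
    have hksm : ∀ (c : k) (x : ↥(M.deg 0)), c • x = (algebraMap k G.sub c) • x := by
      intro c x
      refine Subtype.ext ?_
      show c • (x : E) = ((algebraMap k G.sub c : A)) • (x : E)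
      rw [← algebraMap_smul A c (x : E)]
      rfl
    refine ⟨{ toFun := g, invFun := g.symm, map_add' := g.map_add,
              left_inv := g.left_inv, right_inv := g.right_inv, map_smul' := ?_ }, ?_⟩
    · intro c x
      simp only [RingHom.id_apply]
      rw [hksm c x, map_smul]
      refine Subtype.ext ?_
      show ((algebraMap k G.sub c : A)) • ((g x : E)) = c • ((g x : E))
      rw [← algebraMap_smul A c ((g x : E))]
      rfl
    · intro a ha x hx
      have : (⟨a • (x : E), hx⟩ : ↥(M.deg 0)) = (⟨a, ha⟩ : G.sub) • x := rfl
      rw [this]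
      show ((g ((⟨a, ha⟩ : G.sub) • x) : E)) = a • ((g x : E))
      rw [map_smul]
      rfl

end App


section ProdEquiv

variable {k A : Type*} [CommSemiring k] [CommRing A] [Algebra k A]
variable (G : GradedAlgebraStruct k A)
variable {E' E'' : Type*}
  [AddCommGroup E'] [Module A E'] [Module k E'] [IsScalarTower k A E']
  [AddCommGroup E''] [Module A E''] [Module k E''] [IsScalarTower k A E'']
variable (M' : GradedModuleStruct k A G E') (M'' : GradedModuleStruct k A G E'')
  (M : GradedModuleStruct k A G (E' × E''))

lemma deg_mem_prod (j : ZMod 2) (h : M.deg j = (M'.deg j).prod (M''.deg j))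
    (x : ↥(M.deg j)) :
    (x : E' × E'').1 ∈ M'.deg j ∧ (x : E' × E'').2 ∈ M''.deg j := by
  have hx : (x : E' × E'') ∈ (M'.deg j).prod (M''.deg j) := by rw [← h]; exact x.2
  exact Submodule.mem_prod.1 hx

lemma deg_mem_of_prod (j : ZMod 2) (h : M.deg j = (M'.deg j).prod (M''.deg j))
    (p : ↥(M'.deg j) × ↥(M''.deg j)) :
    (((p.1 : E'), (p.2 : E'')) : E' × E'') ∈ M.deg j := by
  rw [h]; exact Submodule.mem_prod.2 ⟨p.1.2, p.2.2⟩

/-- The `G.sub`-linear equivalence `(E' × E'')ⱼ ≃ E'ⱼ × E''ⱼ`. -/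
def degProdEquiv (j : ZMod 2) (h : M.deg j = (M'.deg j).prod (M''.deg j)) :
    ↥(M.deg j) ≃ₗ[G.sub] (↥(M'.deg j) × ↥(M''.deg j)) where
  toFun x := (⟨(x : E' × E'').1, (deg_mem_prod G M' M'' M j h x).1⟩,
              ⟨(x : E' × E'').2, (deg_mem_prod G M' M'' M j h x).2⟩)
  invFun p := ⟨((p.1 : E'), (p.2 : E'')), deg_mem_of_prod G M' M'' M j h p⟩
  map_add' x y := rfl
  map_smul' r x := rfl
  left_inv x := Subtype.ext rfl
  right_inv p := rfl

end ProdEquiv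

lemma isReduced_of_isSemisimpleRing (A : Type*) [CommRing A] [IsSemisimpleRing A] :
    IsReduced A := by
  refine ⟨fun x hx => ?_⟩
  obtain ⟨n, hn⟩ := hx
  obtain ⟨e, he, hspan⟩ := IsSemisimpleRing.ideal_eq_span_idempotent (Ideal.span {x})
  have hex : e ∈ Ideal.span {x} := by
    rw [hspan]; exact Ideal.mem_span_singleton_self e
  obtain ⟨a, hax⟩ := Ideal.mem_span_singleton'.1 hex
  have hxe : x ∈ Ideal.span {e} := by
    rw [← hspan]; exact Ideal.mem_span_singleton_self x
  obtain ⟨b, hbx⟩ := Ideal.mem_span_singleton'.1 hxe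
  cases n with
  | zero =>
    have h1 : (1 : A) = 0 := by simpa using hn
    calc x = x * 1 := (mul_one x).symm
    _ = 0 := by rw [h1, mul_zero]
  | succ n =>
    have he0 : e = 0 := by
      have h1 : e ^ (n + 1) = e := he.pow_succ_eq n
      have h2 : e ^ (n + 1) = a ^ (n + 1) * x ^ (n + 1) := by rw [← hax, mul_pow]
      rw [h1, hn, mul_zero] at h2
      exact h2
    rw [← hbx, he0, mul_zero]

theorem gradedModule_direct_sum_two_complex_implies_third
    {k A E' E'' : Type*} [Field k] [CharZero k]
    [CommRing A] [Algebra k A] [FiniteDimensional k A] [IsSemisimpleRing A]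
    [AddCommGroup E'] [Module A E'] [Module k E'] [IsScalarTower k A E'] [Module.Finite A E']
    [AddCommGroup E''] [Module A E''] [Module k E''] [IsScalarTower k A E''] [Module.Finite A E'']
    (G : GradedAlgebraStruct k A)
    (M' : GradedModuleStruct k A G E') (M'' : GradedModuleStruct k A G E'')
    (M : GradedModuleStruct k A G (E' × E''))
    (hM : ∀ i : ZMod 2, M.deg i = (M'.deg i).prod (M''.deg i)) :
    (M'.IsComplex → M''.IsComplex → M.IsComplex) ∧
    (M.IsComplex → M'.IsComplex → M''.IsComplex) ∧
    (M.IsComplex → M''.IsComplex → M'.IsComplex) := by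
  -- the even part of `A` is a semisimple ring
  haveI : IsReduced A := isReduced_of_isSemisimpleRing A
  haveI : IsReduced ↥G.sub := by
    refine ⟨fun x hx => ?_⟩
    obtain ⟨n, hn⟩ := hx
    have hxn : ((x : A)) ^ n = 0 := by
      have := congrArg (Subtype.val) hn
      simpa using this
    have : (x : A) = 0 := IsReduced.eq_zero _ ⟨n, hxn⟩
    exact Subtype.ext this
  haveI hfinsub : Module.Finite k ↥G.sub := by
    have : Module.Finite k ↥(Subalgebra.toSubmodule G.sub) := inferInstance
    exact this
  haveI : IsArtinianRing ↥G.sub := isArtinian_of_tower k inferInstance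
  haveI : IsSemisimpleRing ↥G.sub := IsArtinianRing.isSemisimpleRing_of_isReduced ↥G.sub
  haveI : Module.Finite k E' := Module.Finite.trans A E'
  haveI : Module.Finite k E'' := Module.Finite.trans A E''
  -- equivalences with products
  let q0 := degProdEquiv G M' M'' M 0 (hM 0)
  let q1 := degProdEquiv G M' M'' M 1 (hM 1)
  refine ⟨?_, ?_, ?_⟩
  · intro h' h''
    rw [isComplex_iff_nonempty] at h' h'' ⊢
    obtain ⟨f'⟩ := h'
    obtain ⟨f''⟩ := h''
    exact ⟨q0 ≪≫ₗ (f'.prodCongr f'') ≪≫ₗ q1.symm⟩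
  · intro hMc h'
    rw [isComplex_iff_nonempty] at hMc h' ⊢
    obtain ⟨F⟩ := hMc
    obtain ⟨f'⟩ := h'
    have Ψ : (↥(M''.deg 0) × ↥(M'.deg 0)) ≃ₗ[G.sub] (↥(M''.deg 1) × ↥(M'.deg 0)) :=
      (LinearEquiv.prodComm _ _ _) ≪≫ₗ q0.symm ≪≫ₗ F ≪≫ₗ q1 ≪≫ₗ
        (f'.symm.prodCongr (LinearEquiv.refl G.sub ↥(M''.deg 1))) ≪≫ₗ (LinearEquiv.prodComm _ _ _)
    exact cancel_finrank (Module.finrank k ↥(M'.deg 0)) ↥(M'.deg 0) le_rfl Ψ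
  · intro hMc h''
    rw [isComplex_iff_nonempty] at hMc h'' ⊢
    obtain ⟨F⟩ := hMc
    obtain ⟨f''⟩ := h''
    have Ψ : (↥(M'.deg 0) × ↥(M''.deg 0)) ≃ₗ[G.sub] (↥(M'.deg 1) × ↥(M''.deg 0)) :=
      q0.symm ≪≫ₗ F ≪≫ₗ q1 ≪≫ₗ ((LinearEquiv.refl G.sub ↥(M'.deg 1)).prodCongr f''.symm)
    exact cancel_finrank (Module.finrank k ↥(M''.deg 0)) ↥(M''.deg 0) le_rfl Ψ
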